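/- Suppose G is a graph with n vertices and m edges and f : V(G) → ℕ is a function with ∑_{v ∈ V(G)} f(v) > m + n. Then there is no list assignment L for G such that |L(v)| = f(v) for each vertex v and G has a unique proper L-coloring. -/

import Mathlib

open SimpleGraph Finset

section ListColoringDefs

variable {V : Type*}

/-- `f` is a proper coloring of `G` choosing each color from the list `L v`. -/
def IsProperListColoring (G : SimpleGraph V) (L : V → Finset ℕ) (f : V → ℕ) : Prop :=
  (∀ v, f v ∈ L v) ∧ ∀ u v, G.Adj u v → f u ≠ f v

/-- `G` admits a proper coloring from the list assignment `L`. -/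
def ListColorable (G : SimpleGraph V) (L : V → Finset ℕ) : Prop :=
  ∃ f, IsProperListColoring G L f

/-- `G` is colorable from every list assignment with lists of size at least `m`. -/
def Choosable (G : SimpleGraph V) (m : ℕ) : Prop :=
  ∀ L : V → Finset ℕ, (∀ v, m ≤ (L v).card) → ListColorable G L

/-- The list chromatic number of `G`. -/
noncomputable def listChromaticNumber (G : SimpleGraph V) : ℕ :=
  sInf { m | Choosable G m }

/-- `G` is strong `k`-chromatic-choosable: `χ(G) = k` and every `(k-1)`-assignment
from which `G` is not colorable is constant. -/
def StrongCC (G : SimpleGraph V) (k : ℕ) : Prop :=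
  G.chromaticNumber = (k : ℕ∞) ∧
    ∀ L : V → Finset ℕ, (∀ v, (L v).card = k - 1) → ¬ ListColorable G L →
      ∀ u v : V, L u = L v

/-- The number of proper `L`-colorings of `G`. -/
noncomputable def numColorings (G : SimpleGraph V) (L : V → Finset ℕ) : ℕ :=
  Set.ncard { f : V → ℕ | IsProperListColoring G L f }

/-- The list color function `P_ℓ(G,k)`: the minimum number of proper `L`-colorings
over all `k`-assignments `L`. -/
noncomputable def listColorFunction (G : SimpleGraph V) (k : ℕ) : ℕ :=
  sInf { n | ∃ L : V → Finset ℕ, (∀ v, (L v).card = k) ∧ n = numColorings G L }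

/-- The chromatic polynomial `P(G,k)`: the number of proper colorings with colors
from `{0, …, k-1}`. -/
noncomputable def chromPoly (G : SimpleGraph V) (k : ℕ) : ℕ :=
  numColorings G (fun _ => Finset.range k)

/-- The join `G ∨ K_p` of `G` with the complete graph on `p` vertices. -/
def joinK (G : SimpleGraph V) (p : ℕ) : SimpleGraph (V ⊕ Fin p) :=
  SimpleGraph.fromRel (fun a b =>
    match a, b with
    | Sum.inl u, Sum.inl v => G.Adj u v
    | _, _ => True)

/-- The star `K_{1,s}`: center `none` adjacent to the `s` leaves. -/
def starGraph (s : ℕ) : SimpleGraph (Option (Fin s)) :=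
  SimpleGraph.fromRel (fun a _ => a = none)

/-- The cycle graph `C_n` on `Fin n` (for `n ≥ 3`). -/
def cycGraph (n : ℕ) : SimpleGraph (Fin n) :=
  SimpleGraph.fromRel (fun a b => b.val = (a.val + 1) % n)

end ListColoringDefs

section AMS

open Polynomial

/-- Key univariate fact: the Lagrange-interpolation weighted power sum vanishes
for exponents below `#S - 1`. -/
private lemma key_univ (S : Finset ℚ) (a : ℕ) (ha : a + 2 ≤ S.card) :
    ∑ c ∈ S, c ^ a * ∏ c' ∈ S.erase c, (c - c')⁻¹ = 0 := by
  classical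
  have hinj : Set.InjOn (id : ℚ → ℚ) S := Set.injOn_id _
  have hdeg : (Polynomial.X ^ a : Polynomial ℚ).degree < S.card := by
    rw [Polynomial.degree_X_pow]
    exact_mod_cast (by omega : a < S.card)
  have h := Lagrange.eq_interpolate (v := id) hinj hdeg
  have h2 := congrArg (fun p : Polynomial ℚ => p.coeff (S.card - 1)) h
  simp only [Lagrange.interpolate_apply] at h2
  rw [Polynomial.coeff_X_pow] at h2
  rw [Polynomial.finset_sum_coeff] at h2
  have hbasis : ∀ i ∈ S, (Lagrange.basis S id i).coeff (S.card - 1)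
      = ∏ j ∈ S.erase i, (i - j)⁻¹ := by
    intro i hi
    unfold Lagrange.basis Lagrange.basisDivisor
    simp only [id_eq]
    rw [Finset.prod_mul_distrib,
      ← map_prod (Polynomial.C : ℚ →+* Polynomial ℚ) (fun x => (i - x)⁻¹) (S.erase i),
      Polynomial.coeff_C_mul]
    have hm : (∏ j ∈ S.erase i, (Polynomial.X - Polynomial.C j)).Monic :=
      Polynomial.monic_prod_of_monic _ _ (fun j _ => Polynomial.monic_X_sub_C j)
    have hd : (∏ j ∈ S.erase i, (Polynomial.X - Polynomial.C j)).natDegree = S.card - 1 := by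
      rw [Polynomial.natDegree_prod _ _ (fun j _ => Polynomial.X_sub_C_ne_zero j)]
      simp [Polynomial.natDegree_X_sub_C, Finset.card_erase_of_mem hi]
    rw [← hd, hm.coeff_natDegree, mul_one]
  have h3 : ∀ i ∈ S, Polynomial.eval (id i) (Polynomial.X ^ a : Polynomial ℚ)
      * (Lagrange.basis S id i).coeff (S.card - 1) = i ^ a * ∏ j ∈ S.erase i, (i - j)⁻¹ := by
    intro i hi
    rw [hbasis i hi]
    simp
  rw [Finset.sum_congr rfl (fun i hi => by rw [Polynomial.coeff_C_mul, h3 i hi])] at h2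
  have : ¬ (S.card - 1 = a) := by omega
  rw [if_neg this] at h2
  exact h2.symm

end AMS


/-- if `∑ f(v) > m + n` then no list assignment with list sizes `f`
admits a unique proper coloring. -/
theorem stmt_7 {V : Type*} [Fintype V] (G : SimpleGraph V) [Fintype G.edgeSet]
    (n m : ℕ) (hn : Fintype.card V = n) (hm : G.edgeFinset.card = m)
    (f : V → ℕ) (hf : m + n < ∑ v : V, f v) :
    ¬ ∃ L : V → Finset ℕ, (∀ v, (L v).card = f v) ∧
      ∃! g : V → ℕ, IsProperListColoring G L g := by
  classical
  rintro ⟨L, hL, g, hg, hgu⟩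
  letI : LinearOrder V := LinearOrder.lift' (Fintype.equivFin V) (Fintype.equivFin V).injective
  set EP : Finset (V × V) :=
    Finset.univ.filter (fun p : V × V => G.Adj p.1 p.2 ∧ p.1 < p.2) with hEPdef
  have hmemEP : ∀ p : V × V, p ∈ EP ↔ G.Adj p.1 p.2 ∧ p.1 < p.2 := by
    intro p; simp [hEPdef]
  have hcard : EP.card = m := by
    rw [← hm]
    apply Finset.card_bij (s := EP) (t := G.edgeFinset) (fun p _ => Sym2.mk p.1 p.2)
    · intro p hp
      rw [hmemEP] at hp
      rw [SimpleGraph.mem_edgeFinset]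
      exact hp.1
    · intro p hp q hq h
      rw [hmemEP] at hp hq
      rcases Sym2.mk_eq_mk_iff.mp h with h' | h'
      · exact h'
      · exfalso
        have h1 := hp.2
        have h2 := hq.2
        rw [h'] at h1
        simp only [Prod.fst_swap, Prod.snd_swap] at h1
        exact absurd h2 (lt_asymm h1)
    · intro e he
      induction e with
      | h u v =>
        rw [SimpleGraph.mem_edgeFinset, SimpleGraph.mem_edgeSet] at he
        rcases he.ne.lt_or_gt with hlt | hlt
        · exact ⟨(u, v), (hmemEP _).mpr ⟨he, hlt⟩, rfl⟩
        · exact ⟨(v, u), (hmemEP _).mpr ⟨he.symm, hlt⟩, Sym2.eq_swap⟩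
  set P : MvPolynomial V ℚ := ∏ p ∈ EP, (MvPolynomial.X p.1 - MvPolynomial.X p.2) with hPdef
  set w : V → ℕ → ℚ := fun v c => ∏ c' ∈ (L v).erase c, ((c : ℚ) - (c' : ℚ))⁻¹ with hwdef
  have hevalP : ∀ x : V → ℕ, MvPolynomial.eval (fun v => (x v : ℚ)) P
      = ∏ p ∈ EP, ((x p.1 : ℚ) - (x p.2 : ℚ)) := by
    intro x
    rw [hPdef, map_prod]
    simp
  have hdeg1 : ∀ p : V × V,
      (MvPolynomial.X (R := ℚ) p.1 - MvPolynomial.X p.2).totalDegree ≤ 1 := by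
    intro p
    rw [sub_eq_add_neg]
    refine le_trans (MvPolynomial.totalDegree_add _ _) ?_
    rw [MvPolynomial.totalDegree_neg]
    simp [MvPolynomial.totalDegree_X]
  have hdegP : P.totalDegree ≤ m := by
    refine le_trans (MvPolynomial.totalDegree_finset_prod _ _) ?_
    rw [← hcard]
    refine le_trans (Finset.sum_le_sum (fun p _ => hdeg1 p)) ?_
    rw [Finset.sum_const, smul_eq_mul, mul_one]
  have huni : ∀ (T : Finset ℕ) (e : ℕ), e + 2 ≤ T.card →
      ∑ c ∈ T, (c : ℚ) ^ e * ∏ c' ∈ T.erase c, ((c : ℚ) - (c' : ℚ))⁻¹ = 0 := by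
    intro T e he
    have hkey := key_univ (T.image (fun k : ℕ => (k : ℚ))) e
      (by rwa [Finset.card_image_of_injective _ Nat.cast_injective])
    rw [Finset.sum_image (fun x _ y _ h => Nat.cast_injective h)] at hkey
    rw [← hkey]
    refine Finset.sum_congr rfl fun c hc => ?_
    congr 1
    rw [← Finset.image_erase Nat.cast_injective]
    rw [Finset.prod_image (fun x _ y _ h => Nat.cast_injective h)]
  have key : ∑ x ∈ Fintype.piFinset L,
      (MvPolynomial.eval (fun v => (x v : ℚ)) P) * ∏ v, w v (x v) = 0 := by
    have hexp : ∀ x ∈ Fintype.piFinset L,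
        (MvPolynomial.eval (fun v => (x v : ℚ)) P) * ∏ v, w v (x v)
        = ∑ a ∈ P.support, MvPolynomial.coeff a P * ∏ v, ((x v : ℚ) ^ a v * w v (x v)) := by
      intro x _
      rw [MvPolynomial.eval_eq', Finset.sum_mul]
      refine Finset.sum_congr rfl fun a _ => ?_
      rw [mul_assoc, ← Finset.prod_mul_distrib]
    rw [Finset.sum_congr rfl hexp, Finset.sum_comm]
    refine Finset.sum_eq_zero fun a ha => ?_
    rw [← Finset.mul_sum]
    have hps := Finset.prod_univ_sum (fun v => L v) (fun v c => (c : ℚ) ^ a v * w v c)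
    rw [← hps]
    have hv : ∃ v : V, a v + 2 ≤ (L v).card := by
      by_contra hno
      push_neg at hno
      have h2 : ∑ v : V, (L v).card ≤ (∑ v : V, a v) + n := by
        calc ∑ v : V, (L v).card ≤ ∑ v : V, (a v + 1) :=
              Finset.sum_le_sum (fun v _ => by have := hno v; omega)
          _ = (∑ v : V, a v) + n := by
              rw [Finset.sum_add_distrib, Finset.sum_const, ← hn]
              simp [Finset.card_univ]
      have h4 : (a.sum fun _ e => e) ≤ P.totalDegree := MvPolynomial.le_totalDegree ha
      have h5 : (a.sum fun _ e => e) = ∑ v : V, a v :=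
        Finsupp.sum_fintype _ _ (fun _ => rfl)
      have h6 : ∑ v : V, f v = ∑ v : V, (L v).card :=
        Finset.sum_congr rfl fun v _ => (hL v).symm
      omega
    obtain ⟨v, hv⟩ := hv
    have hz : ∑ c ∈ L v, ((c : ℚ) ^ a v * w v (c)) = 0 := by
      simpa only [hwdef] using huni (L v) (a v) hv
    rw [Finset.prod_eq_zero (Finset.mem_univ v) hz, mul_zero]
  have hgmem : g ∈ Fintype.piFinset L := by
    rw [Fintype.mem_piFinset]; exact hg.1
  have hsingle : ∑ x ∈ Fintype.piFinset L,
      (MvPolynomial.eval (fun v => (x v : ℚ)) P) * ∏ v, w v (x v)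
      = (MvPolynomial.eval (fun v => (g v : ℚ)) P) * ∏ v, w v (g v) := by
    apply Finset.sum_eq_single_of_mem g hgmem
    intro x hx hne
    by_cases hz : MvPolynomial.eval (fun v => (x v : ℚ)) P = 0
    · rw [hz, zero_mul]
    · exfalso
      apply hne
      apply hgu
      refine ⟨fun v => (Fintype.mem_piFinset.mp hx) v, ?_⟩
      intro u u' hadj
      rw [hevalP] at hz
      have hzz : ∀ p ∈ EP, ((x p.1 : ℚ) - (x p.2 : ℚ)) ≠ 0 :=
        Finset.prod_ne_zero_iff.mp hz
      rcases hadj.ne.lt_or_gt with hlt | hlt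
      · have h' := hzz (u, u') ((hmemEP _).mpr ⟨hadj, hlt⟩)
        intro hEq
        apply h'
        simp [hEq]
      · have h' := hzz (u', u) ((hmemEP _).mpr ⟨hadj.symm, hlt⟩)
        intro hEq
        apply h'
        simp [hEq]
  have hPg : MvPolynomial.eval (fun v => (g v : ℚ)) P ≠ 0 := by
    rw [hevalP, Finset.prod_ne_zero_iff]
    intro p hp
    rw [hmemEP] at hp
    have hne := hg.2 p.1 p.2 hp.1
    rw [sub_ne_zero]
    exact_mod_cast hne
  have hWg : (∏ v, w v (g v)) ≠ 0 := by
    rw [Finset.prod_ne_zero_iff]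
    intro v _
    rw [hwdef]
    rw [Finset.prod_ne_zero_iff]
    intro c' hc'
    apply inv_ne_zero
    rw [sub_ne_zero]
    have hcne : c' ≠ g v := (Finset.mem_erase.mp hc').1
    exact_mod_cast hcne.symm
  rw [key] at hsingle
  exact (mul_ne_zero hPg hWg) hsingle.symm
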